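/- arXiv:1312.5886 — 4 statements merged into one kernel-verified Lean document; each statement's English description precedes it below -/
import Mathlib

section
/- (Harten's lemma) Consider an update of the form C_j^{n+1} = C_j^n - κ1_{j-1}(C_j^n - C_{j-1}^n) + κ2_j(C_{j+1}^n - C_j^n) on a doubly infinite grid, where the coefficients satisfy κ1_j ≥ 0, κ2_j ≥ 0, and κ1_j + κ2_j ≤ 1 for all j. Then the scheme is total variation diminishing: Σ_j |C_{j+1}^{n+1} - C_j^{n+1}| ≤ Σ_j |C_{j+1}^n - C_j^n| (assuming the total variation of C^n is finite). -/
/-- Harten's lemma: a scheme in incremental form with nonnegative coefficients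
summing to at most one is total variation diminishing. -/
theorem stmt_4 (Cn Cn1 κ1 κ2 : ℤ → ℝ)
    (hκ1 : ∀ j, 0 ≤ κ1 j) (hκ2 : ∀ j, 0 ≤ κ2 j)
    (hsum : ∀ j, κ1 j + κ2 j ≤ 1)
    (hupdate : ∀ j, Cn1 j =
      Cn j - κ1 (j - 1) * (Cn j - Cn (j - 1)) + κ2 j * (Cn (j + 1) - Cn j))
    (hTV : Summable fun j : ℤ => |Cn (j + 1) - Cn j|) :
    ∑' j : ℤ, |Cn1 (j + 1) - Cn1 j| ≤ ∑' j : ℤ, |Cn (j + 1) - Cn j| := by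
  set D : ℤ → ℝ := fun j => |Cn (j + 1) - Cn j| with hD
  have hDnn : ∀ j, 0 ≤ D j := fun j => abs_nonneg _
  -- shifted summabilities
  have hTVm : Summable fun j : ℤ => D (j - 1) :=
    ((Equiv.subRight (1 : ℤ)).summable_iff (f := D)).mpr hTV
  have hTVp : Summable fun j : ℤ => D (j + 1) :=
    ((Equiv.addRight (1 : ℤ)).summable_iff (f := D)).mpr hTV
  have hκ1le : ∀ j, κ1 j ≤ 1 := fun j => by have := hsum j; have := hκ2 j; linarith
  have hκ2le : ∀ j, κ2 j ≤ 1 := fun j => by have := hsum j; have := hκ1 j; linarith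
  have hS1 : Summable fun j : ℤ => (1 - κ1 j - κ2 j) * D j := by
    apply Summable.of_nonneg_of_le (fun j => ?_) (fun j => ?_) hTV
    · exact mul_nonneg (by have := hsum j; linarith) (hDnn j)
    · nlinarith [hDnn j, hκ1 j, hκ2 j]
  have hS2 : Summable fun j : ℤ => κ1 (j - 1) * D (j - 1) := by
    apply Summable.of_nonneg_of_le (fun j => ?_) (fun j => ?_) hTVm
    · exact mul_nonneg (hκ1 _) (hDnn _)
    · nlinarith [hDnn (j - 1), hκ1 (j - 1), hκ1le (j - 1)]
  have hS3 : Summable fun j : ℤ => κ2 (j + 1) * D (j + 1) := by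
    apply Summable.of_nonneg_of_le (fun j => ?_) (fun j => ?_) hTVp
    · exact mul_nonneg (hκ2 _) (hDnn _)
    · nlinarith [hDnn (j + 1), hκ2 (j + 1), hκ2le (j + 1)]
  -- pointwise bound
  have hpt : ∀ j : ℤ, |Cn1 (j + 1) - Cn1 j| ≤
      (1 - κ1 j - κ2 j) * D j + κ1 (j - 1) * D (j - 1) + κ2 (j + 1) * D (j + 1) := by
    intro j
    have h1 := hupdate j
    have h2 := hupdate (j + 1)
    have e1 : (j : ℤ) + 1 - 1 = j := by ring
    rw [e1] at h2
    have key : Cn1 (j + 1) - Cn1 j =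
        (1 - κ1 j - κ2 j) * (Cn (j + 1) - Cn j)
        + κ1 (j - 1) * (Cn j - Cn (j - 1))
        + κ2 (j + 1) * (Cn (j + 1 + 1) - Cn (j + 1)) := by
      rw [h1, h2]; ring
    have hd1 : D j = |Cn (j + 1) - Cn j| := rfl
    have hd2 : D (j - 1) = |Cn j - Cn (j - 1)| := by
      simp only [hD]; rw [show (j : ℤ) - 1 + 1 = j by ring]
    have hd3 : D (j + 1) = |Cn (j + 1 + 1) - Cn (j + 1)| := rfl
    calc |Cn1 (j + 1) - Cn1 j|
        ≤ |(1 - κ1 j - κ2 j) * (Cn (j + 1) - Cn j)|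
          + |κ1 (j - 1) * (Cn j - Cn (j - 1))|
          + |κ2 (j + 1) * (Cn (j + 1 + 1) - Cn (j + 1))| := by
          rw [key]; exact (abs_add_le _ _).trans (by gcongr; exact abs_add_le _ _)
      _ = (1 - κ1 j - κ2 j) * D j + κ1 (j - 1) * D (j - 1)
          + κ2 (j + 1) * D (j + 1) := by
          rw [hd1, hd2, hd3, abs_mul, abs_mul, abs_mul,
            abs_of_nonneg (by have := hsum j; linarith : (0:ℝ) ≤ 1 - κ1 j - κ2 j),
            abs_of_nonneg (hκ1 _), abs_of_nonneg (hκ2 _)]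
  have hSsum : Summable fun j : ℤ => (1 - κ1 j - κ2 j) * D j
      + κ1 (j - 1) * D (j - 1) + κ2 (j + 1) * D (j + 1) := (hS1.add hS2).add hS3
  have hleft : Summable fun j : ℤ => |Cn1 (j + 1) - Cn1 j| :=
    Summable.of_nonneg_of_le (fun j => abs_nonneg _) hpt hSsum
  calc ∑' j : ℤ, |Cn1 (j + 1) - Cn1 j|
      ≤ ∑' j : ℤ, ((1 - κ1 j - κ2 j) * D j + κ1 (j - 1) * D (j - 1)
          + κ2 (j + 1) * D (j + 1)) := Summable.tsum_le_tsum hpt hleft hSsum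
    _ = ∑' j, (1 - κ1 j - κ2 j) * D j + ∑' j, κ1 (j - 1) * D (j - 1)
          + ∑' j, κ2 (j + 1) * D (j + 1) := by
          rw [Summable.tsum_add (hS1.add hS2) hS3, Summable.tsum_add hS1 hS2]
    _ = ∑' j, (1 - κ1 j - κ2 j) * D j + ∑' j, κ1 j * D j
          + ∑' j, κ2 j * D j := by
          have e1 := (Equiv.subRight (1 : ℤ)).tsum_eq (f := fun j => κ1 j * D j)
          have e2 := (Equiv.addRight (1 : ℤ)).tsum_eq (f := fun j => κ2 j * D j)
          simp only [Equiv.subRight_apply, Equiv.coe_addRight] at e1 e2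
          rw [e1, e2]
    _ = ∑' j, ((1 - κ1 j - κ2 j) * D j + κ1 j * D j + κ2 j * D j) := by
          have hS2' : Summable fun j : ℤ => κ1 j * D j := by
            apply Summable.of_nonneg_of_le (fun j => mul_nonneg (hκ1 _) (hDnn _))
              (fun j => ?_) hTV
            nlinarith [hDnn j, hκ1 j, hκ1le j]
          have hS3' : Summable fun j : ℤ => κ2 j * D j := by
            apply Summable.of_nonneg_of_le (fun j => mul_nonneg (hκ2 _) (hDnn _))
              (fun j => ?_) hTV
            nlinarith [hDnn j, hκ2 j, hκ2le j]
          rw [Summable.tsum_add (hS1.add hS2') hS3', Summable.tsum_add hS1 hS2']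
    _ = ∑' j, D j := by
          congr 1; funext j; ring
end

section
/- Consider the fully discrete first order optimal variable relaxed (HLL-type) update H(C;j) = C_j - (Δt/Δx)(F_{j+1/2} - F_{j-1/2}) with numerical flux F_{j-1/2} = F(C_{j-1}) + (-a⁻_{j-1/2})/(a⁺_{j-1/2} - a⁻_{j-1/2}) · [F(C_j) - F(C_{j-1}) - a⁺_{j-1/2}(C_j - C_{j-1})], where a⁻_{j-1/2} < 0 < a⁺_{j-1/2}. If a⁻_{j-1/2} ≤ min(F'(C_{j-1}), 0) and a⁺_{j-1/2} ≥ max(F'(C_j), 0) for all j, and (Δt/Δx)·a_max ≤ 1/2 where a_max bounds all |a^±|, then all partial derivatives ∂H(C;j)/∂C_i are nonnegative, i.e. the scheme is monotone. -/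
/-- The first order optimal (HLL-type) variable relaxed numerical flux at
interface j - 1/2, with left and right speeds `aL j < 0 < aR j`. -/
noncomputable def hllFlux (F : ℝ → ℝ) (aL aR : ℤ → ℝ) (C : ℤ → ℝ) (j : ℤ) : ℝ :=
  F (C (j - 1)) + (-aL j) / (aR j - aL j) *
    (F (C j) - F (C (j - 1)) - aR j * (C j - C (j - 1)))

/-- The fully discrete first order optimal variable relaxed update. -/
noncomputable def hllUpdate (Δt Δx : ℝ) (F : ℝ → ℝ) (aL aR : ℤ → ℝ)
    (C : ℤ → ℝ) (j : ℤ) : ℝ :=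
  C j - Δt / Δx * (hllFlux F aL aR C (j + 1) - hllFlux F aL aR C j)

private lemma deriv_affine (F : ℝ → ℝ) (hF : Differentiable ℝ F) (A B D x : ℝ) :
    deriv (fun t => A + B * t + D * F t) x = B + D * deriv F x := by
  have h : HasDerivAt (fun t : ℝ => A + B * t + D * F t) (0 + B * 1 + D * deriv F x) x :=
    ((hasDerivAt_const x A).add ((hasDerivAt_id x).const_mul B)).add
      ((hF x).hasDerivAt.const_mul D)
  simpa using h.deriv

/-- Monotonicity of the first order optimal variable relaxed scheme. -/
theorem stmt_6 (Δt Δx amax : ℝ) (F : ℝ → ℝ) (aL aR : ℤ → ℝ) (C : ℤ → ℝ)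
    (hΔt : 0 < Δt) (hΔx : 0 < Δx)
    (hF : Differentiable ℝ F)
    (hneg : ∀ j, aL j < 0) (hpos : ∀ j, 0 < aR j)
    (hsubL : ∀ j, aL j ≤ min (deriv F (C (j - 1))) 0)
    (hsubR : ∀ j, max (deriv F (C j)) 0 ≤ aR j)
    (hboundL : ∀ j, |aL j| ≤ amax) (hboundR : ∀ j, aR j ≤ amax)
    (hCFL : Δt / Δx * amax ≤ 1 / 2) :
    ∀ i j : ℤ,
      0 ≤ deriv (fun t => hllUpdate Δt Δx F aL aR (Function.update C i t) j) (C i) := by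
  intro i j
  have hl : (0:ℝ) ≤ Δt / Δx := by positivity
  have hj1 : j + 1 - 1 = j := by ring
  have hp : (0:ℝ) < aR j - aL j := by have := hneg j; have := hpos j; linarith
  have hp' : (0:ℝ) < aR (j+1) - aL (j+1) := by
    have := hneg (j+1); have := hpos (j+1); linarith
  by_cases h1 : i = j - 1
  · subst h1
    have hfun : (fun t => hllUpdate Δt Δx F aL aR (Function.update C (j-1) t) j)
        = (fun t => (hllUpdate Δt Δx F aL aR C j
            - (Δt/Δx * (-aL j / (aR j - aL j) * aR j)) * C (j-1)
            - (Δt/Δx * (1 - -aL j / (aR j - aL j))) * F (C (j-1)))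
            + (Δt/Δx * (-aL j / (aR j - aL j) * aR j)) * t
            + (Δt/Δx * (1 - -aL j / (aR j - aL j))) * F t) := by
      funext t
      simp only [hllUpdate, hllFlux]
      rw [hj1]
      simp only [Function.update_self,
        Function.update_of_ne (show j ≠ j - 1 by omega),
        Function.update_of_ne (show j + 1 ≠ j - 1 by omega)]
      ring
    rw [hfun, deriv_affine F hF]
    have hdl : aL j ≤ deriv F (C (j - 1)) := le_trans (hsubL j) (min_le_left _ _)
    have key : Δt/Δx * (-aL j / (aR j - aL j) * aR j)
        + Δt/Δx * (1 - -aL j / (aR j - aL j)) * deriv F (C (j-1))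
        = Δt/Δx * (aR j * (deriv F (C (j-1)) - aL j) / (aR j - aL j)) := by
      field_simp
      ring
    rw [key]
    exact mul_nonneg hl (div_nonneg (mul_nonneg (hpos j).le (by linarith)) hp.le)
  · by_cases h2 : i = j
    · subst h2
      have hfun : (fun t => hllUpdate Δt Δx F aL aR (Function.update C i t) i)
          = (fun t => (hllUpdate Δt Δx F aL aR C i
              - (1 - Δt/Δx * (-aL (i+1) / (aR (i+1) - aL (i+1)) * aR (i+1)
                  + -aL i / (aR i - aL i) * aR i)) * C i
              - (Δt/Δx * (-aL i / (aR i - aL i) + -aL (i+1) / (aR (i+1) - aL (i+1)) - 1)) * F (C i))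
              + (1 - Δt/Δx * (-aL (i+1) / (aR (i+1) - aL (i+1)) * aR (i+1)
                  + -aL i / (aR i - aL i) * aR i)) * t
              + (Δt/Δx * (-aL i / (aR i - aL i) + -aL (i+1) / (aR (i+1) - aL (i+1)) - 1)) * F t) := by
        funext t
        simp only [hllUpdate, hllFlux]
        rw [show i + 1 - 1 = i by ring]
        simp only [Function.update_self,
          Function.update_of_ne (show i - 1 ≠ i by omega),
          Function.update_of_ne (show i + 1 ≠ i by omega)]
        ring
      rw [hfun, deriv_affine F hF]
      -- abbreviations
      have hpI : (0:ℝ) < aR i - aL i := by have := hneg i; have := hpos i; linarith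
      have hpI' : (0:ℝ) < aR (i+1) - aL (i+1) := by
        have := hneg (i+1); have := hpos (i+1); linarith
      have hθ0 : (0:ℝ) ≤ -aL i / (aR i - aL i) :=
        div_nonneg (by have := hneg i; linarith) hpI.le
      have hθ'0 : (0:ℝ) ≤ -aL (i+1) / (aR (i+1) - aL (i+1)) :=
        div_nonneg (by have := hneg (i+1); linarith) hpI'.le
      have hθ'1 : -aL (i+1) / (aR (i+1) - aL (i+1)) ≤ 1 := by
        rw [div_le_one hpI']; have := hpos (i+1); linarith
      have hfmax : deriv F (C i) ≤ amax :=
        le_trans (le_trans (le_max_left _ _) (hsubR i)) (hboundR i)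
      have hfmin : -amax ≤ deriv F (C i) := by
        have h := hsubL (i+1)
        rw [show i + 1 - 1 = i by ring] at h
        have := (abs_le.mp (hboundL (i+1))).1
        have := min_le_left (deriv F (C i)) 0
        linarith
      have haL : -amax ≤ aL i := (abs_le.mp (hboundL i)).1
      have haR' : aR (i+1) ≤ amax := hboundR (i+1)
      have hT1 : -aL (i+1) / (aR (i+1) - aL (i+1)) * aR (i+1)
          + (1 - -aL (i+1) / (aR (i+1) - aL (i+1))) * deriv F (C i) ≤ amax := by
        nlinarith [mul_nonneg hθ'0 (sub_nonneg.mpr haR'),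
          mul_nonneg (sub_nonneg.mpr hθ'1) (sub_nonneg.mpr hfmax)]
      have hT2 : -aL i / (aR i - aL i) * (aR i - deriv F (C i)) ≤ amax := by
        rw [div_mul_eq_mul_div, div_le_iff₀ hpI]
        nlinarith [mul_nonneg (show (0:ℝ) ≤ amax + aL i by linarith) (hpos i).le,
          mul_nonneg (show (0:ℝ) ≤ -aL i by have := hneg i; linarith)
            (show (0:ℝ) ≤ amax + deriv F (C i) by linarith)]
      have e : (1 - Δt/Δx * (-aL (i+1) / (aR (i+1) - aL (i+1)) * aR (i+1)
              + -aL i / (aR i - aL i) * aR i))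
          + (Δt/Δx * (-aL i / (aR i - aL i) + -aL (i+1) / (aR (i+1) - aL (i+1)) - 1)) * deriv F (C i)
          = 1 - Δt/Δx * (-aL (i+1) / (aR (i+1) - aL (i+1)) * aR (i+1)
              + (1 - -aL (i+1) / (aR (i+1) - aL (i+1))) * deriv F (C i))
            - Δt/Δx * (-aL i / (aR i - aL i) * (aR i - deriv F (C i))) := by ring
      rw [e]
      have b1 := mul_le_mul_of_nonneg_left hT1 hl
      have b2 := mul_le_mul_of_nonneg_left hT2 hl
      linarith
    · by_cases h3 : i = j + 1
      · subst h3
        have hfun : (fun t => hllUpdate Δt Δx F aL aR (Function.update C (j+1) t) j)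
            = (fun t => (hllUpdate Δt Δx F aL aR C j
                - (Δt/Δx * (-aL (j+1) / (aR (j+1) - aL (j+1)) * aR (j+1))) * C (j+1)
                - (-(Δt/Δx * (-aL (j+1) / (aR (j+1) - aL (j+1))))) * F (C (j+1)))
                + (Δt/Δx * (-aL (j+1) / (aR (j+1) - aL (j+1)) * aR (j+1))) * t
                + (-(Δt/Δx * (-aL (j+1) / (aR (j+1) - aL (j+1))))) * F t) := by
          funext t
          simp only [hllUpdate, hllFlux]
          rw [hj1]
          simp only [Function.update_self,
            Function.update_of_ne (show j - 1 ≠ j + 1 by omega),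
            Function.update_of_ne (show j ≠ j + 1 by omega)]
          ring
        rw [hfun, deriv_affine F hF]
        have hdr : deriv F (C (j+1)) ≤ aR (j+1) :=
          le_trans (le_max_left _ _) (hsubR (j+1))
        have key : Δt/Δx * (-aL (j+1) / (aR (j+1) - aL (j+1)) * aR (j+1))
            + -(Δt/Δx * (-aL (j+1) / (aR (j+1) - aL (j+1)))) * deriv F (C (j+1))
            = Δt/Δx * ((-aL (j+1)) * (aR (j+1) - deriv F (C (j+1))) / (aR (j+1) - aL (j+1))) := by
          field_simp
          ring
        rw [key]
        exact mul_nonneg hl (div_nonneg (mul_nonneg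
          (by have := hneg (j+1); linarith) (by linarith)) hp'.le)
      · have hfun : (fun t => hllUpdate Δt Δx F aL aR (Function.update C i t) j)
            = (fun _ => hllUpdate Δt Δx F aL aR C j) := by
          funext t
          simp only [hllUpdate, hllFlux]
          rw [hj1]
          simp only [Function.update_of_ne (show j - 1 ≠ i by omega),
            Function.update_of_ne (show j ≠ i by omega),
            Function.update_of_ne (show j + 1 ≠ i by omega)]
        rw [hfun, deriv_const]
end

section
/- For the 2x2 Engquist–Runborg system with fluxes F(C) = (C₁²/r, C₁C₂/r) and G(C) = (C₁C₂/r, C₂²/r), where r = √(C₁² + C₂²) > 0, the Jacobian F'(C) has the single eigenvalue cos θ (where cos θ = C₁/r, sin θ = C₂/r) with algebraic multiplicity 2 but geometric multiplicity 1 whenever sin θ ≠ 0; i.e., F'(C) is similar to the Jordan block [[cos θ, -sin θ],[0, cos θ]] via R = [[cos θ, -sin θ],[sin θ, cos θ]], hence has an incomplete set of eigenvectors. -/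
open Real Matrix

set_option maxHeartbeats 1000000

/-- The x-flux of the Engquist–Runborg geometric optics system. -/
noncomputable def ERFlux : (Fin 2 → ℝ) → (Fin 2 → ℝ) :=
  fun C => ![(C 0) ^ 2 / Real.sqrt ((C 0) ^ 2 + (C 1) ^ 2),
             C 0 * C 1 / Real.sqrt ((C 0) ^ 2 + (C 1) ^ 2)]

noncomputable abbrev ERP0 := ContinuousLinearMap.proj (R := ℝ) (φ := fun _ : Fin 2 => ℝ) 0
noncomputable abbrev ERP1 := ContinuousLinearMap.proj (R := ℝ) (φ := fun _ : Fin 2 => ℝ) 1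

/-- The Jacobian of the Engquist–Runborg x-flux at C = (r cos θ, r sin θ) is
R·[[cos θ, -sin θ],[0, cos θ]]·R⁻¹ with R the rotation by θ; when sin θ ≠ 0 it
has the single eigenvalue cos θ with a one-dimensional eigenspace. -/
theorem stmt_8 (r θ : ℝ) (hr : 0 < r)
    (C : Fin 2 → ℝ) (hC : C = ![r * Real.cos θ, r * Real.sin θ])
    (A : Matrix (Fin 2) (Fin 2) ℝ)
    (hA : A = !![Real.cos θ, -Real.sin θ; Real.sin θ, Real.cos θ] *
              !![Real.cos θ, -Real.sin θ; 0, Real.cos θ] *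
              (!![Real.cos θ, -Real.sin θ; Real.sin θ, Real.cos θ])⁻¹) :
    HasFDerivAt ERFlux
      (LinearMap.toContinuousLinearMap (Matrix.toLin' A)) C ∧
    (Real.sin θ ≠ 0 →
      (∀ (μ : ℝ) (v : Fin 2 → ℝ), v ≠ 0 → A.mulVec v = μ • v → μ = Real.cos θ) ∧
      ∃ v : Fin 2 → ℝ, v ≠ 0 ∧ A.mulVec v = Real.cos θ • v ∧
        ∀ w : Fin 2 → ℝ, A.mulVec w = Real.cos θ • w → ∃ t : ℝ, w = t • v) := by
  have pyth := Real.sin_sq_add_cos_sq θ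
  -- explicit form of A
  have hRinv : (!![Real.cos θ, -Real.sin θ; Real.sin θ, Real.cos θ])⁻¹
      = !![Real.cos θ, Real.sin θ; -Real.sin θ, Real.cos θ] := by
    apply Matrix.inv_eq_right_inv
    ext i j
    fin_cases i <;> fin_cases j <;>
      simp [Matrix.mul_apply, Fin.sum_univ_two, Matrix.one_apply] <;>
      first | ring1 | (linear_combination pyth)
  have hA' : A = !![Real.cos θ * (1 + Real.sin θ^2), -(Real.cos θ^2 * Real.sin θ);
           Real.sin θ^3, Real.cos θ^3] := by
    rw [hA, hRinv]
    ext i j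
    fin_cases i <;> fin_cases j <;>
      simp [Matrix.mul_apply, Fin.sum_univ_two] <;>
      first | ring1 | (linear_combination Real.cos θ * pyth)
  constructor
  · -- the derivative part
    unfold ERFlux
    have hsq : (C 0) ^ 2 + (C 1) ^ 2 = r ^ 2 := by
      subst hC; simp; linear_combination r^2 * pyth
    have hsqrt : Real.sqrt ((C 0) ^ 2 + (C 1) ^ 2) = r := by
      rw [hsq, Real.sqrt_sq hr.le]
    have hne : (C 0) ^ 2 + (C 1) ^ 2 ≠ 0 := by rw [hsq]; positivity
    have hrne : r ≠ 0 := hr.ne'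
    have hx : HasFDerivAt (fun C : Fin 2 → ℝ => C 0) ERP0 C := hasFDerivAt_apply 0 C
    have hy : HasFDerivAt (fun C : Fin 2 → ℝ => C 1) ERP1 C := hasFDerivAt_apply 1 C
    have hq : HasFDerivAt (fun C : Fin 2 → ℝ => (C 0) ^ 2 + (C 1) ^ 2)
        ((C 0 • ERP0 + C 0 • ERP0) + (C 1 • ERP1 + C 1 • ERP1)) C := by
      have h := (hx.mul hx).add (hy.mul hy)
      have heq : (fun C : Fin 2 → ℝ => (C 0) ^ 2 + (C 1) ^ 2)
          = fun C : Fin 2 → ℝ => C 0 * C 0 + C 1 * C 1 := by funext v; ring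
      rw [heq]; exact h
    have hsqrtD : HasFDerivAt (fun C : Fin 2 → ℝ => Real.sqrt ((C 0) ^ 2 + (C 1) ^ 2))
        ((1 / (2 * Real.sqrt ((C 0) ^ 2 + (C 1) ^ 2))) •
          ((C 0 • ERP0 + C 0 • ERP0) + (C 1 • ERP1 + C 1 • ERP1))) C := hq.sqrt hne
    have hsne : Real.sqrt ((C 0) ^ 2 + (C 1) ^ 2) ≠ 0 := by rw [hsqrt]; exact hrne
    have hinv : HasFDerivAt (fun C : Fin 2 → ℝ => (Real.sqrt ((C 0) ^ 2 + (C 1) ^ 2))⁻¹)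
        ((-(Real.sqrt ((C 0) ^ 2 + (C 1) ^ 2) ^ 2)⁻¹) •
          ((1 / (2 * Real.sqrt ((C 0) ^ 2 + (C 1) ^ 2))) •
            ((C 0 • ERP0 + C 0 • ERP0) + (C 1 • ERP1 + C 1 • ERP1)))) C :=
      (hasDerivAt_inv hsne).comp_hasFDerivAt C hsqrtD
    rw [hasFDerivAt_pi']
    intro i
    fin_cases i
    · have hnum : HasFDerivAt (fun C : Fin 2 → ℝ => (C 0) ^ 2)
          (C 0 • ERP0 + C 0 • ERP0) C := by
        have h := hx.mul hx
        have heq : (fun C : Fin 2 → ℝ => (C 0) ^ 2)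
            = fun C : Fin 2 → ℝ => C 0 * C 0 := by funext v; ring
        rw [heq]; exact h
      have h1 := hnum.mul hinv
      convert h1 using 1
      case e'_11 => funext x; simp [div_eq_mul_inv]
      case e'_8 => rfl
      ext v : 1
      simp [Matrix.toLin'_apply, Matrix.mulVec, dotProduct, Fin.sum_univ_two, hA', hsqrt]
      rw [hC]
      simp only [Matrix.cons_val_zero, Matrix.cons_val_one, Matrix.head_cons]
      field_simp
      linear_combination (2*Real.cos θ*v 0) * pyth
    · have hnum : HasFDerivAt (fun C : Fin 2 → ℝ => C 0 * C 1) (C 0 • ERP1 + C 1 • ERP0) C :=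
        hx.mul hy
      have h1 := hnum.mul hinv
      convert h1 using 1
      case e'_11 => funext x; simp [div_eq_mul_inv]
      case e'_8 => rfl
      ext v : 1
      simp [Matrix.toLin'_apply, Matrix.mulVec, dotProduct, Fin.sum_univ_two, hA', hsqrt]
      rw [hC]
      simp only [Matrix.cons_val_zero, Matrix.cons_val_one, Matrix.head_cons]
      field_simp
      linear_combination (2*(Real.sin θ*v 0 + Real.cos θ*v 1)) * pyth
  · -- the eigenvalue part
    intro hs
    constructor
    · intro μ v hvne hv
      have e0 := congrFun hv 0
      have e1 := congrFun hv 1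
      simp [hA', Matrix.mulVec, dotProduct, Fin.sum_univ_two] at e0 e1
      by_contra hμ
      have hd : μ - Real.cos θ ≠ 0 := sub_ne_zero.mpr hμ
      have h2 : (μ - Real.cos θ) * v 0
          = Real.cos θ * Real.sin θ * (Real.sin θ * v 0 - Real.cos θ * v 1) := by
        linear_combination -e0
      have h3 : (μ - Real.cos θ) * v 1
          = Real.sin θ^2 * (Real.sin θ * v 0 - Real.cos θ * v 1) := by
        linear_combination -e1 + Real.cos θ * v 1 * pyth
      have h4 : (μ - Real.cos θ) * (Real.sin θ * v 0 - Real.cos θ * v 1) = 0 := by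
        linear_combination Real.sin θ * h2 - Real.cos θ * h3
      have hu : Real.sin θ * v 0 - Real.cos θ * v 1 = 0 :=
        (mul_eq_zero.mp h4).resolve_left hd
      have hv0 : v 0 = 0 := by
        have := h2
        rw [hu] at this
        simpa [hd] using mul_eq_zero.mp (by linarith [this] : (μ - Real.cos θ) * v 0 = 0)
      have hv1 : v 1 = 0 := by
        have := h3
        rw [hu] at this
        simpa [hd] using mul_eq_zero.mp (by linarith [this] : (μ - Real.cos θ) * v 1 = 0)
      exact hvne (funext fun i => by fin_cases i <;> simpa [hv0, hv1])
    · refine ⟨![Real.cos θ, Real.sin θ], ?_, ?_, ?_⟩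
      · intro h
        have := congrFun h 1
        simp at this
        exact hs this
      · funext i
        fin_cases i <;>
          simp [hA', Matrix.mulVec, dotProduct, Fin.sum_univ_two] <;>
          first | ring1 | (linear_combination (Real.sin θ*Real.cos θ) * pyth)
      · intro w hw
        have e1 := congrFun hw 1
        simp [hA', Matrix.mulVec, dotProduct, Fin.sum_univ_two] at e1
        have hkey : Real.sin θ^2 * (Real.sin θ * w 0 - Real.cos θ * w 1) = 0 := by
          linear_combination e1 - Real.cos θ * w 1 * pyth
        have hu : Real.sin θ * w 0 - Real.cos θ * w 1 = 0 :=
          (mul_eq_zero.mp hkey).resolve_left (pow_ne_zero 2 hs)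
        refine ⟨w 1 / Real.sin θ, funext fun i => ?_⟩
        fin_cases i <;> simp <;> field_simp <;> linarith [hu]
end

section
/- For the Engquist–Runborg system, every linear combination α·F'(C) + β·G'(C) with (α,β) ≠ (0,0) of the two flux Jacobians is non-diagonalizable (has a repeated eigenvalue α cos θ + β sin θ with a one-dimensional eigenspace) whenever -α sin θ + β cos θ ≠ 0. -/
set_option maxHeartbeats 1000000


open Real Matrix

/-- Every nontrivial linear combination of the two Engquist–Runborg flux
Jacobians (written in their Jordan form conjugated by the rotation R) is
non-diagonalizable whenever -α sin θ + β cos θ ≠ 0: it has the repeated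
eigenvalue α cos θ + β sin θ with a one-dimensional eigenspace. -/
theorem stmt_9 (θ α β : ℝ) (hαβ : (α, β) ≠ (0, 0))
    (hoff : -α * Real.sin θ + β * Real.cos θ ≠ 0)
    (R M : Matrix (Fin 2) (Fin 2) ℝ)
    (hR : R = !![Real.cos θ, -Real.sin θ; Real.sin θ, Real.cos θ])
    (hM : M = α • (R * !![Real.cos θ, -Real.sin θ; 0, Real.cos θ] * R⁻¹) +
              β • (R * !![Real.sin θ, Real.cos θ; 0, Real.sin θ] * R⁻¹)) :
    (∀ (μ : ℝ) (v : Fin 2 → ℝ), v ≠ 0 → M.mulVec v = μ • v →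
        μ = α * Real.cos θ + β * Real.sin θ) ∧
    ∃ v : Fin 2 → ℝ, v ≠ 0 ∧
      M.mulVec v = (α * Real.cos θ + β * Real.sin θ) • v ∧
      ∀ w : Fin 2 → ℝ,
        M.mulVec w = (α * Real.cos θ + β * Real.sin θ) • w → ∃ t : ℝ, w = t • v := by
  set s := Real.sin θ with hs
  set c := Real.cos θ with hc
  have hpy : s ^ 2 + c ^ 2 = 1 := Real.sin_sq_add_cos_sq θ
  set a := α * c + β * s with ha
  set b := -α * s + β * c with hb
  have hbne : b ≠ 0 := hoff
  have hRinv : R⁻¹ = !![c, s; -s, c] := by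
    rw [hR]
    apply Matrix.inv_eq_right_inv
    ext i j
    fin_cases i <;> fin_cases j <;>
      simp [Matrix.mul_apply, Fin.sum_univ_two, Matrix.one_apply] <;> nlinarith [hpy]
  have hM' : M = !![a - s*c*b, c^2*b; -s^2*b, a + s*c*b] := by
    rw [hM, hRinv, hR]
    ext i j
    fin_cases i <;> fin_cases j <;>
      simp [Matrix.mul_apply, Fin.sum_univ_two, ha, hb] <;>
      first
        | linear_combination (α * c + β * s) * hpy
        | ring
  -- key: extract scalar equations
  have key : ∀ (μ : ℝ) (w : Fin 2 → ℝ), M.mulVec w = μ • w →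
      (μ - a) * w 0 = c * b * (c * w 1 - s * w 0) ∧
      (μ - a) * w 1 = s * b * (c * w 1 - s * w 0) := by
    intro μ w hw
    rw [hM'] at hw
    have e0 := congrFun hw 0
    have e1 := congrFun hw 1
    simp [Matrix.mulVec, dotProduct, Fin.sum_univ_two] at e0 e1
    constructor
    · linear_combination -e0
    · linear_combination -e1
  constructor
  · intro μ v hv hmv
    obtain ⟨k0, k1⟩ := key μ v hmv
    have hd : (μ - a) * (c * v 1 - s * v 0) = 0 := by linear_combination c * k1 - s * k0
    have h0 : (μ - a) ^ 2 * v 0 = 0 := by linear_combination (μ - a) * k0 + c * b * hd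
    have h1 : (μ - a) ^ 2 * v 1 = 0 := by linear_combination (μ - a) * k1 + s * b * hd
    have hv' : v 0 ≠ 0 ∨ v 1 ≠ 0 := by
      by_contra h
      push_neg at h
      apply hv
      funext i; fin_cases i <;> simp [h.1, h.2]
    have : (μ - a) ^ 2 = 0 := by
      rcases hv' with h | h
      · exact (mul_eq_zero.mp h0).resolve_right h
      · exact (mul_eq_zero.mp h1).resolve_right h
    have : μ - a = 0 := by
      exact sq_eq_zero_iff.mp this
    linarith
  · refine ⟨![c, s], ?_, ?_, ?_⟩
    · intro h
      have h0 := congrFun h 0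
      have h1 := congrFun h 1
      simp at h0 h1
      rw [h0, h1] at hpy
      norm_num at hpy
    · rw [hM']
      funext i
      fin_cases i <;>
        simp [Matrix.mulVec, dotProduct, Fin.sum_univ_two] <;> ring
    · intro w hw
      obtain ⟨k0, k1⟩ := key _ w hw
      simp only [sub_self, zero_mul] at k0 k1
      have hd : c * w 1 - s * w 0 = 0 := by
        rcases eq_or_ne c 0 with hc0 | hc0
        · have hs0 : s ≠ 0 := by
            intro hs0; rw [hs0, hc0] at hpy; norm_num at hpy
          have := (mul_eq_zero.mp k1.symm).resolve_left (mul_ne_zero hs0 hbne)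
          exact this
        · exact (mul_eq_zero.mp k0.symm).resolve_left (mul_ne_zero hc0 hbne)
      rcases eq_or_ne c 0 with hc0 | hc0
      · have hs0 : s ≠ 0 := by
          intro hs0; rw [hs0, hc0] at hpy; norm_num at hpy
        have hw0 : w 0 = 0 := by
          have hsw : s * w 0 = 0 := by rw [hc0] at hd; linarith
          rcases mul_eq_zero.mp hsw with h | h
          · exact absurd h hs0
          · exact h
        refine ⟨w 1 / s, ?_⟩
        funext i
        fin_cases i
        · simp [hw0, hc0]
        · simp [Pi.smul_apply, smul_eq_mul]
          field_simp
      · refine ⟨w 0 / c, ?_⟩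
        funext i
        fin_cases i
        · simp [Pi.smul_apply, smul_eq_mul]
          field_simp
        · simp [Pi.smul_apply, smul_eq_mul]
          field_simp
          nlinarith [hd]
end
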